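/- Let q = 3ⁿ with n odd, and let K be a finite field with q² elements with F its subfield of order q. Fix ξ ∈ K \ F and write each x ∈ K uniquely as x = x₀ + x₁ξ with x₀, x₁ ∈ F. Define f : K → K by f(x₀ + x₁ξ) = (x₀² + x₁¹⁰) + (2x₀x₁ + x₁⁶)ξ (the planar function of a Ganley semifield). Then for all a, b ∈ K the number of x ∈ K with f(x+a) − b ∈ ξF equals 1 if b ∈ ξF and equals q+1 if b ∉ ξF; hence U_ξ = {(x, tξ) : x ∈ K, t ∈ F} ∪ {(∞)} is a unital in the Ganley semifield plane Π(f). -/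

import Mathlib

open Finset Polynomial in
private lemma aux_card_pow_le {K : Type} [Field K] [Fintype K] [DecidableEq K]
    (m : ℕ) (hm : 0 < m) (a : K) :
    ((univ : Finset K).filter (fun z : K => z ^ m = a)).card ≤ m := by
  have hsub : (univ : Finset K).filter (fun z : K => z ^ m = a) ⊆ (nthRoots m a).toFinset := by
    intro z hz
    rw [Multiset.mem_toFinset, mem_nthRoots hm]
    exact (mem_filter.mp hz).2
  calc ((univ : Finset K).filter (fun z : K => z ^ m = a)).card
      ≤ (nthRoots m a).toFinset.card := Finset.card_le_card hsub
    _ ≤ Multiset.card (nthRoots m a) := Multiset.toFinset_card_le _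
    _ ≤ m := card_nthRoots m a

open Finset Polynomial in
private lemma aux_card_fixed_le {K : Type} [Field K] [Fintype K] [DecidableEq K]
    {q : ℕ} (hq : 2 ≤ q) :
    ((univ : Finset K).filter (fun t : K => t ^ q = t)).card ≤ q := by
  set p : K[X] := X ^ q - X with hp
  have hdeg : p.natDegree = q := by
    rw [hp]
    rw [natDegree_sub_eq_left_of_natDegree_lt] <;> simp [natDegree_X_pow] <;> omega
  have hp0 : p ≠ 0 := by
    intro h; rw [h] at hdeg; simp at hdeg; omega
  have hsub : (univ : Finset K).filter (fun t : K => t ^ q = t) ⊆ p.roots.toFinset := by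
    intro z hz
    rw [Multiset.mem_toFinset, mem_roots hp0]
    have := (mem_filter.mp hz).2
    simp [IsRoot, hp, sub_eq_zero, this]
  calc ((univ : Finset K).filter (fun t : K => t ^ q = t)).card
      ≤ p.roots.toFinset.card := Finset.card_le_card hsub
    _ ≤ Multiset.card p.roots := Multiset.toFinset_card_le _
    _ ≤ p.natDegree := card_roots' p
    _ = q := hdeg

open Finset in
private lemma aux_fiber_count {K : Type} [Field K] [Fintype K] [DecidableEq K]
    {q : ℕ} (hq : 2 ≤ q) (hcard : Fintype.card K = q ^ 2)
    (hN : ∀ z : K, (z ^ (q + 1)) ^ q = z ^ (q + 1)) :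
    ((univ : Finset K).filter (fun t : K => t ^ q = t)).card = q ∧
    (∀ c : K, c ^ q = c → c ≠ 0 →
      ((univ : Finset K).filter (fun z : K => z ^ (q + 1) = c)).card = q + 1) := by
  obtain ⟨m, rfl⟩ : ∃ m, q = m + 2 := ⟨q - 2, by omega⟩
  set q := m + 2 with hqdef
  set NZ : Finset K := univ.erase 0 with hNZ
  have hmemNZ : ∀ z : K, z ∈ NZ ↔ z ≠ 0 := by
    intro z; simp [hNZ]
  have hNZcard : NZ.card = q ^ 2 - 1 := by
    rw [hNZ, Finset.card_erase_of_mem (mem_univ 0), Finset.card_univ, hcard]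
  set g : K → K := fun z => z ^ (q + 1) with hg
  set Img : Finset K := NZ.image g with hImg
  set Fz : Finset K := univ.filter (fun t : K => t ^ q = t) with hFz
  have h0F : (0 : K) ∈ Fz := by simp [hFz]
  have hFle : Fz.card ≤ q := aux_card_fixed_le (by omega)
  have hImgsub : Img ⊆ Fz.erase 0 := by
    intro c hc
    obtain ⟨z, hz, rfl⟩ := mem_image.mp hc
    have hz0 : z ≠ 0 := (hmemNZ z).mp hz
    rw [Finset.mem_erase]
    constructor
    · exact pow_ne_zero _ hz0
    · simp only [hFz, mem_filter, mem_univ, true_and]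
      exact hN z
  -- all fibers over Img have the same cardinality k
  set k : ℕ := (NZ.filter (fun z => g z = 1)).card with hk
  have hfiber : ∀ c ∈ Img, (NZ.filter (fun z => g z = c)).card = k := by
    intro c hc
    obtain ⟨z₀, hz₀mem, hz₀⟩ := mem_image.mp hc
    have hz₀0 : z₀ ≠ 0 := (hmemNZ z₀).mp hz₀mem
    rw [hk]
    simp only [hg] at hz₀
    refine (Finset.card_nbij' (fun z => z * z₀) (fun w => w * z₀⁻¹) ?_ ?_ ?_ ?_).symm
    · intro z hz
      rw [Finset.mem_coe, mem_filter] at hz ⊢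
      obtain ⟨hz1, hz2⟩ := hz
      refine ⟨(hmemNZ _).mpr (mul_ne_zero ((hmemNZ z).mp hz1) hz₀0), ?_⟩
      simp only [hg] at hz2 ⊢
      rw [mul_pow, hz2, hz₀, one_mul]
    · intro w hw
      rw [Finset.mem_coe, mem_filter] at hw ⊢
      obtain ⟨hw1, hw2⟩ := hw
      refine ⟨(hmemNZ _).mpr ?_, ?_⟩
      · exact mul_ne_zero ((hmemNZ w).mp hw1) (inv_ne_zero hz₀0)
      · simp only [hg] at hw2 ⊢
        rw [mul_pow, inv_pow, hw2, hz₀]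
        field_simp
        exact div_self (hz₀ ▸ pow_ne_zero _ hz₀0)
    · intro w _; field_simp
    · intro z _; field_simp
  have hsum : NZ.card = ∑ c ∈ Img, (NZ.filter (fun z => g z = c)).card :=
    Finset.card_eq_sum_card_fiberwise (fun z hz => mem_image_of_mem g hz)
  have hsum2 : NZ.card = Img.card * k := by
    rw [hsum, Finset.sum_congr rfl hfiber, Finset.sum_const, smul_eq_mul]
  have hkle : k ≤ q + 1 := by
    calc k ≤ ((univ : Finset K).filter (fun z : K => z ^ (q + 1) = 1)).card := by
          apply Finset.card_le_card
          apply Finset.filter_subset_filter _ (Finset.subset_univ _)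
      _ ≤ q + 1 := aux_card_pow_le (q + 1) (by omega) 1
  have hIle : Img.card ≤ q - 1 := by
    calc Img.card ≤ (Fz.erase 0).card := Finset.card_le_card hImgsub
      _ = Fz.card - 1 := Finset.card_erase_of_mem h0F
      _ ≤ q - 1 := by omega
  have hIk : Img.card * k = q ^ 2 - 1 := by omega
  -- arithmetic: Img.card = q - 1 and k = q + 1
  have harith : Img.card = q - 1 ∧ k = q + 1 := by
    have h1 : Img.card ≤ m + 1 := by omega
    have h2 : Img.card * k = m ^ 2 + 4 * m + 3 := by
      have : q ^ 2 = m ^ 2 + 4 * m + 4 := by rw [hqdef]; ring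
      omega
    constructor
    · by_contra h
      have h3 : Img.card ≤ m := by omega
      have : Img.card * k ≤ m * (m + 3) := Nat.mul_le_mul h3 (by omega)
      nlinarith
    · have hI : Img.card = m + 1 := by
        by_contra h
        have h3 : Img.card ≤ m := by omega
        have : Img.card * k ≤ m * (m + 3) := Nat.mul_le_mul h3 (by omega)
        nlinarith
      rw [hI] at h2
      nlinarith
  obtain ⟨hIcard, hkval⟩ := harith
  have hImgeq : Img = Fz.erase 0 := by
    apply Finset.eq_of_subset_of_card_le hImgsub
    calc (Fz.erase 0).card = Fz.card - 1 := Finset.card_erase_of_mem h0F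
      _ ≤ q - 1 := by omega
      _ = Img.card := hIcard.symm
  have hFzcard : Fz.card = q := by
    have h1 : (Fz.erase 0).card = Fz.card - 1 := Finset.card_erase_of_mem h0F
    have h2 : 1 ≤ Fz.card := Finset.card_pos.mpr ⟨0, h0F⟩
    rw [← hImgeq] at h1
    omega
  refine ⟨hFzcard, ?_⟩
  intro c hcF hc0
  have hcmem : c ∈ Img := by
    rw [hImgeq, Finset.mem_erase]
    exact ⟨hc0, by simp [hFz, hcF]⟩
  have : (univ.filter (fun z : K => z ^ (q + 1) = c)) = NZ.filter (fun z => g z = c) := by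
    ext z
    simp only [mem_filter, mem_univ, true_and, hmemNZ, hg]
    constructor
    · intro h
      refine ⟨?_, h⟩
      intro rfl0
      rw [rfl0] at h
      rw [zero_pow (by omega)] at h
      exact hc0 h.symm
    · tauto
  rw [this, hfiber c hcmem, hkval]

open Finset in
private lemma aux_decomp_unique {K : Type} [Field K] {q : ℕ}
    (hsub : ∀ x y : K, (x - y) ^ q = x ^ q - y ^ q)
    {θ : K} (hθ : θ ^ q ≠ θ) {s t s' t' : K}
    (hs : s ^ q = s) (ht : t ^ q = t) (hs' : s' ^ q = s') (ht' : t' ^ q = t')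
    (heq : s + t * θ = s' + t' * θ) : s = s' ∧ t = t' := by
  by_cases h : t = t'
  · subst h
    exact ⟨by linear_combination heq, rfl⟩
  · exfalso
    have hθval : θ = (s - s') / (t' - t) := by
      field_simp [sub_ne_zero.mpr (Ne.symm h)]
      linear_combination -heq
    apply hθ
    rw [hθval, div_pow, hsub, hsub, hs, hs', ht, ht']

open Finset in
private lemma aux_decomp_surj {K : Type} [Field K] [Fintype K] [DecidableEq K]
    {q : ℕ} (hcard : Fintype.card K = q ^ 2)
    (hsub : ∀ x y : K, (x - y) ^ q = x ^ q - y ^ q)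
    (hFq : ((univ : Finset K).filter (fun t : K => t ^ q = t)).card = q)
    {θ : K} (hθ : θ ^ q ≠ θ) (x : K) :
    ∃ s t : K, s ^ q = s ∧ t ^ q = t ∧ x = s + t * θ := by
  set Fz : Finset K := univ.filter (fun t : K => t ^ q = t) with hFz
  set P : Finset K := (Fz ×ˢ Fz).image (fun p => p.1 + p.2 * θ) with hP
  have hinj : Set.InjOn (fun p : K × K => p.1 + p.2 * θ) ↑(Fz ×ˢ Fz) := by
    intro p hp p' hp' h
    simp only [Finset.coe_product, Set.mem_prod, Finset.mem_coe, hFz, mem_filter] at hp hp'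
    have := aux_decomp_unique hsub hθ hp.1.2 hp.2.2 hp'.1.2 hp'.2.2 h
    exact Prod.ext this.1 this.2
  have hPcard : P.card = q ^ 2 := by
    rw [hP, Finset.card_image_of_injOn hinj, Finset.card_product, hFq]
    ring
  have hPuniv : P = univ := Finset.eq_univ_of_card P (by rw [hPcard, hcard])
  have hx : x ∈ P := hPuniv ▸ mem_univ x
  obtain ⟨⟨s, t⟩, hmem, hxe⟩ := mem_image.mp hx
  rw [Finset.mem_product] at hmem
  simp only [hFz, mem_filter] at hmem
  exact ⟨s, t, hmem.1.2, hmem.2.2, hxe.symm⟩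

private lemma aux_ncard_setOf {α : Type} [Fintype α] (p : α → Prop) [DecidablePred p] :
    {x | p x}.ncard = (Finset.univ.filter p).card := by
  rw [Set.ncard_eq_toFinset_card']
  simp [Set.toFinset_setOf]



/-- The point set of the shift plane `Π(f)`: affine points `(x,y)`, points at
infinity `(a)` for `a ∈ K`, and the point `(∞)`. -/
abbrev ShiftPt (K : Type) : Type := (K × K) ⊕ (K ⊕ Unit)

/-- The affine line `L_{a,b} = {(x, f(x+a) − b) : x ∈ K} ∪ {(a)}` of the shift plane. -/
def affLine (K : Type) [Field K] (f : K → K) (a b : K) : Set (ShiftPt K) :=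
  {P | (∃ x : K, P = Sum.inl (x, f (x + a) - b)) ∨ P = Sum.inr (Sum.inl a)}

/-- The vertical line `N_a = {(a,y) : y ∈ K} ∪ {(∞)}` of the shift plane. -/
def vertLine (K : Type) [Field K] (a : K) : Set (ShiftPt K) :=
  {P | (∃ y : K, P = Sum.inl (a, y)) ∨ P = Sum.inr (Sum.inr ())}

/-- The line at infinity of the shift plane. -/
def lineAtInf (K : Type) : Set (ShiftPt K) :=
  {P | ∃ s : K ⊕ Unit, P = Sum.inr s}

/-- The set of all lines of the shift plane `Π(f)`. -/
def shiftLines (K : Type) [Field K] (f : K → K) : Set (Set (ShiftPt K)) :=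
  {L | (∃ a b : K, L = affLine K f a b) ∨ (∃ a : K, L = vertLine K a) ∨ L = lineAtInf K}

/-- The set `θF = {tθ : t ∈ F}`, where `F = {t : t^q = t}` is the subfield of order `q`. -/
def scalarSet (K : Type) [Field K] (q : ℕ) (θ : K) : Set K :=
  {c | ∃ t : K, t ^ q = t ∧ c = t * θ}

/-- The point set `U_θ = {(x, tθ) : x ∈ K, t ∈ F} ∪ {(∞)}`. -/
def unitalSet (K : Type) [Field K] (q : ℕ) (θ : K) : Set (ShiftPt K) :=
  {P | (∃ x t : K, t ^ q = t ∧ P = Sum.inl (x, t * θ)) ∨ P = Sum.inr (Sum.inr ())}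

/-- Theorem 2.5 (c).  Let `q = 3ⁿ` with `n` odd, `ξ ∈ K \ F`, and
`f(x₀ + x₁ξ) = (x₀² + x₁¹⁰) + (2x₀x₁ + x₁⁶)ξ` (the planar function of a Ganley
semifield).  Then for all `a b` the number of `x` with `f(x+a) − b ∈ ξF` is `1`
if `b ∈ ξF` and `q+1` otherwise; hence `U_ξ` is a unital in `Π(f)`. -/
theorem stmt7 (n q : ℕ) (hn : 0 < n) (hnodd : Odd n) (hq : q = 3 ^ n)
    (K : Type) [Field K] [Fintype K] (hcard : Fintype.card K = q ^ 2)
    (ξ : K) (hξ : ξ ^ q ≠ ξ)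
    (f : K → K)
    (hf : ∀ x0 x1 : K, x0 ^ q = x0 → x1 ^ q = x1 →
      f (x0 + x1 * ξ) = (x0 ^ 2 + x1 ^ 10) + (2 * x0 * x1 + x1 ^ 6) * ξ) :
    (∀ a b : K,
      (b ∈ scalarSet K q ξ → {x : K | f (x + a) - b ∈ scalarSet K q ξ}.ncard = 1) ∧
      (b ∉ scalarSet K q ξ → {x : K | f (x + a) - b ∈ scalarSet K q ξ}.ncard = q + 1)) ∧
    (∀ L ∈ shiftLines K f,
      (L ∩ unitalSet K q ξ).ncard = 1 ∨ (L ∩ unitalSet K q ξ).ncard = q + 1) := by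
  classical
  have hq2 : 2 ≤ q := by
    rw [hq]
    calc 2 ≤ 3 ^ 1 := by norm_num
    _ ≤ 3 ^ n := Nat.pow_le_pow_right (by norm_num) hn
  have hqodd : Odd q := by rw [hq]; exact Odd.pow ⟨1, rfl⟩
  have hq4 : q % 4 = 3 := by
    obtain ⟨k, hk⟩ := hnodd
    rw [hq, hk]
    have h1 : 3 ^ (2 * k + 1) = 9 ^ k * 3 := by rw [pow_succ, pow_mul]; norm_num
    rw [h1, Nat.mul_mod, Nat.pow_mod]
    norm_num
  have hq5 : ¬ (5 ∣ q - 1) := by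
    intro hdvd
    have h9 : q ^ 2 % 5 = 4 := by
      obtain ⟨k, hk⟩ := hnodd
      have h1 : q ^ 2 = 9 ^ n := by
        rw [hq, ← pow_mul, Nat.mul_comm, pow_mul]; norm_num
      have h2 : (9 : ℕ) ^ n = 81 ^ k * 9 := by
        rw [hk, pow_succ, pow_mul]; norm_num
      rw [h1, h2, Nat.mul_mod, Nat.pow_mod]
      norm_num
    obtain ⟨j, hj⟩ := hdvd
    have hqe : q = 5 * j + 1 := by omega
    have : q ^ 2 = 5 * (5 * j * j + 2 * j) + 1 := by rw [hqe]; ring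
    omega
  have hchar : CharP K 3 := by
    have h1 : CharP K (ringChar K) := ringChar.charP K
    have h2 : (ringChar K).Prime := CharP.char_is_prime K (ringChar K)
    have h3 : (ringChar K : K) ∣ _ := dvd_refl _
    have h4 : ringChar K ∣ q ^ 2 := by
      rw [← CharP.cast_eq_zero_iff K (ringChar K) (q ^ 2), ← hcard]
      exact FiniteField.cast_card_eq_zero K
    have h5 : ringChar K ∣ 3 := by
      rw [hq, ← pow_mul] at h4
      exact h2.dvd_of_dvd_pow h4
    have h6 : ringChar K = 3 := ((Nat.prime_dvd_prime_iff_eq h2 (by norm_num)).mp h5)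
    rw [← h6]; exact h1
  haveI hp3 : Fact (Nat.Prime 3) := ⟨by norm_num⟩
  have hfrob : ∀ x y : K, (x + y) ^ q = x ^ q + y ^ q := by
    intro x y; rw [hq]; exact add_pow_char_pow x y 3 n
  have hsub : ∀ x y : K, (x - y) ^ q = x ^ q - y ^ q := by
    intro x y; rw [hq]; exact sub_pow_char_pow (p := 3) (n := n) x y
  have hKq : ∀ z : K, z ^ q ^ 2 = z := by
    intro z; rw [← hcard]; exact FiniteField.pow_card z
  have hN : ∀ z : K, (z ^ (q + 1)) ^ q = z ^ (q + 1) := by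
    intro z
    rw [← pow_mul]
    have h1 : (q + 1) * q = q ^ 2 + q := by ring
    rw [h1, pow_add, hKq, ← pow_succ']
  have h2ne : (2 : K) ≠ 0 := by
    intro h2
    have := (CharP.cast_eq_zero_iff K 3 2).mp h2
    norm_num at this
  have h2eq : (2 : K) = -1 := by
    have h3 : (3 : K) = 0 := CharP.cast_eq_zero K 3
    linear_combination h3
  have hone : (1 : K) ≠ -1 := by
    intro h
    apply h2ne
    linear_combination h
  -- the imaginary unit
  have hsq : IsSquare (-1 : K) := by
    rw [FiniteField.isSquare_neg_one_iff, hcard]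
    obtain ⟨r, hr⟩ := hqodd
    have : q ^ 2 = 4 * (r * r + r) + 1 := by rw [hr]; ring
    omega
  obtain ⟨im, him⟩ := hsq
  have hii : im ^ 2 = -1 := by rw [sq]; exact him.symm
  have him0 : im ≠ 0 := by
    intro h; rw [h] at hii; simp at hii
  have hiq : im ^ q = -im := by
    have h1 : im ^ q = (im ^ 2) ^ (q / 2) * im := by
      rw [← pow_mul, ← pow_succ]
      congr 1
      omega
    have h2 : Odd (q / 2) := Nat.odd_iff.mpr (by omega)
    rw [h1, hii, h2.neg_one_pow]
    ring
  have hiθ : im ^ q ≠ im := by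
    rw [hiq]
    intro h
    apply him0
    have : (2 : K) * im = 0 := by linear_combination -h
    rcases mul_eq_zero.mp this with h' | h'
    · exact absurd h' h2ne
    · exact h'
  obtain ⟨hFq, hfib⟩ := aux_fiber_count hq2 hcard hN
  have hξ0 : ξ ≠ 0 := by
    intro h; apply hξ; rw [h]; exact zero_pow (by omega)
  -- fifth powers are injective on F
  have h5inj : ∀ t u : K, t ^ q = t → u ^ q = u → t ^ 5 = u ^ 5 → t = u := by
    intro t u ht hu h
    by_cases ht0 : t = 0
    · rw [ht0] at h ⊢
      have : u ^ 5 = 0 := by rw [← h]; simp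
      exact (pow_eq_zero_iff (by norm_num)).mp this |>.symm
    by_cases hu0 : u = 0
    · rw [hu0] at h
      simp at h
      exact absurd h ht0
    set v : K := t / u with hv
    have hv0 : v ≠ 0 := div_ne_zero ht0 hu0
    have hv5 : v ^ 5 = 1 := by
      rw [hv, div_pow, h, div_self (pow_ne_zero _ hu0)]
    have hvq : v ^ q = v := by rw [hv, div_pow, ht, hu]
    have hvq1 : v ^ (q - 1) = 1 := by
      have h1 : v ^ (q - 1) * v = 1 * v := by
        rw [← pow_succ, one_mul]
        have h2 : q - 1 + 1 = q := by omega
        rw [h2, hvq]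
      exact mul_right_cancel₀ hv0 h1
    have ho5 : orderOf v ∣ 5 := orderOf_dvd_of_pow_eq_one hv5
    have hoq : orderOf v ∣ q - 1 := orderOf_dvd_of_pow_eq_one hvq1
    have hgcd : Nat.gcd 5 (q - 1) = 1 :=
      (Nat.Prime.coprime_iff_not_dvd (by norm_num)).mpr hq5
    have : orderOf v ∣ 1 := hgcd ▸ Nat.dvd_gcd ho5 hoq
    have hv1 : v = 1 := orderOf_eq_one_iff.mp (Nat.dvd_one.mp this)
    rw [hv] at hv1
    exact (div_eq_one_iff_eq hu0).mp hv1
  -- fifth powers are surjective on F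
  have h5surj : ∀ u : K, u ^ q = u → ∃ t : K, t ^ q = t ∧ t ^ 5 = u := by
    intro u hu
    set Fz : Finset K := Finset.univ.filter (fun t : K => t ^ q = t) with hFz
    have hmaps : Fz.image (fun t => t ^ 5) ⊆ Fz := by
      intro c hc
      obtain ⟨t, ht, rfl⟩ := Finset.mem_image.mp hc
      simp only [hFz, Finset.mem_filter, Finset.mem_univ, true_and] at ht ⊢
      rw [pow_right_comm, ht]
    have hinj : Set.InjOn (fun t : K => t ^ 5) ↑Fz := by
      intro t ht t' ht' h
      simp only [Finset.coe_filter, Set.mem_setOf_eq, hFz, Finset.mem_univ, true_and] at ht ht'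
      exact h5inj t t' ht ht' h
    have himg : Fz.image (fun t => t ^ 5) = Fz := by
      apply Finset.eq_of_subset_of_card_le hmaps
      rw [Finset.card_image_of_injOn hinj]
    have humem : u ∈ Fz := by simp [hFz, hu]
    rw [← himg] at humem
    obtain ⟨t, ht, hte⟩ := Finset.mem_image.mp humem
    simp only [hFz, Finset.mem_filter, Finset.mem_univ, true_and] at ht
    exact ⟨t, ht, hte⟩
  -- sum of two squares in F vanishes only trivially
  have hzero : ∀ s u : K, s ^ q = s → u ^ q = u → s ^ 2 + u ^ 2 = 0 → s = 0 ∧ u = 0 := by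
    intro s u hs hu h
    by_cases hu0 : u = 0
    · refine ⟨?_, hu0⟩
      rw [hu0] at h
      simp at h
      exact h
    exfalso
    set w : K := s / u with hw
    have hw2 : w ^ 2 = -1 := by
      rw [hw, div_pow]
      rw [div_eq_iff (pow_ne_zero _ hu0)]
      linear_combination h
    have hw0 : w ≠ 0 := by
      intro h0; rw [h0] at hw2; simp at hw2
    have hwq : w ^ q = w := by rw [hw, div_pow, hs, hu]
    have hw4 : w ^ 4 = 1 := by
      have : w ^ 4 = (w ^ 2) ^ 2 := by ring
      rw [this, hw2]; ring
    have hwq1 : w ^ (q - 1) = 1 := by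
      have h1 : w ^ (q - 1) * w = 1 * w := by
        rw [← pow_succ, one_mul]
        have h2 : q - 1 + 1 = q := by omega
        rw [h2, hwq]
      exact mul_right_cancel₀ hw0 h1
    have ho4 : orderOf w ∣ 4 := orderOf_dvd_of_pow_eq_one hw4
    have hoq : orderOf w ∣ q - 1 := orderOf_dvd_of_pow_eq_one hwq1
    have h4 : (4 : ℕ) = 2 ^ 2 := by norm_num
    rw [h4] at ho4
    obtain ⟨j, hj, hdj⟩ := (Nat.dvd_prime_pow Nat.prime_two).mp ho4
    have hw21 : w ^ 2 = 1 := by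
      rcases Nat.lt_or_ge j 2 with hj2 | hj2
      · apply orderOf_dvd_iff_pow_eq_one.mp
        rw [hdj]
        have h21 : (2:ℕ) ^ j ∣ 2 ^ 1 := pow_dvd_pow 2 (by omega)
        simpa using h21
      · exfalso
        have hj2' : j = 2 := by omega
        rw [hj2'] at hdj
        rw [hdj] at hoq
        norm_num at hoq
        omega
    rw [hw2] at hw21
    exact hone hw21.symm
  -- norm form: (s + u*im)^(q+1) = s^2 + u^2 for s,u ∈ F
  have hnorm : ∀ s u : K, s ^ q = s → u ^ q = u → (s + u * im) ^ (q + 1) = s ^ 2 + u ^ 2 := by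
    intro s u hs hu
    have h1 : (s + u * im) ^ q = s - u * im := by
      rw [hfrob, mul_pow, hs, hu, hiq]; ring
    calc (s + u * im) ^ (q + 1) = (s + u * im) ^ q * (s + u * im) := by rw [pow_succ]
      _ = (s - u * im) * (s + u * im) := by rw [h1]
      _ = s ^ 2 - u ^ 2 * im ^ 2 := by ring
      _ = s ^ 2 + u ^ 2 := by rw [hii]; ring
  -- circle count
  have hcircle : ∀ c : K, c ^ q = c →
      (Finset.univ.filter (fun p : K × K =>
        p.1 ^ q = p.1 ∧ p.2 ^ q = p.2 ∧ p.1 ^ 2 + p.2 ^ 2 = c)).card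
        = if c = 0 then 1 else q + 1 := by
    intro c hc
    by_cases hc0 : c = 0
    · rw [if_pos hc0, hc0]
      have : (Finset.univ.filter (fun p : K × K =>
          p.1 ^ q = p.1 ∧ p.2 ^ q = p.2 ∧ p.1 ^ 2 + p.2 ^ 2 = 0)) = {((0 : K), (0 : K))} := by
        ext ⟨s, u⟩
        simp only [Finset.mem_filter, Finset.mem_univ, true_and, Finset.mem_singleton,
          Prod.mk.injEq]
        constructor
        · rintro ⟨hs, hu, h⟩
          exact hzero s u hs hu h
        · rintro ⟨rfl, rfl⟩
          refine ⟨?_, ?_, by ring⟩ <;> exact zero_pow (by omega)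
      rw [this, Finset.card_singleton]
    · rw [if_neg hc0, ← hfib c hc hc0]
      apply Finset.card_bij (fun (p : K × K) _ => p.1 + p.2 * im)
      · rintro ⟨s, u⟩ hp
        simp only [Finset.mem_filter, Finset.mem_univ, true_and] at hp ⊢
        rw [hnorm s u hp.1 hp.2.1, hp.2.2]
      · rintro ⟨s, u⟩ hp ⟨s', u'⟩ hp' h
        simp only [Finset.mem_filter, Finset.mem_univ, true_and] at hp hp'
        have := aux_decomp_unique hsub hiθ hp.1 hp.2.1 hp'.1 hp'.2.1 h
        exact Prod.ext this.1 this.2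
      · intro z hz
        simp only [Finset.mem_filter, Finset.mem_univ, true_and] at hz
        obtain ⟨s, u, hs, hu, rfl⟩ := aux_decomp_surj hcard hsub hFq hiθ z
        refine ⟨(s, u), ?_, rfl⟩
        simp only [Finset.mem_filter, Finset.mem_univ, true_and]
        refine ⟨hs, hu, ?_⟩
        rw [← hnorm s u hs hu]
        exact hz
  -- count of points on s^2 + t^10 = c
  have hcount : ∀ c : K, c ^ q = c →
      (Finset.univ.filter (fun p : K × K =>
        p.1 ^ q = p.1 ∧ p.2 ^ q = p.2 ∧ p.1 ^ 2 + p.2 ^ 10 = c)).card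
        = if c = 0 then 1 else q + 1 := by
    intro c hc
    rw [← hcircle c hc]
    apply Finset.card_bij (fun (p : K × K) _ => (p.1, p.2 ^ 5))
    · rintro ⟨s, t⟩ hp
      simp only [Finset.mem_filter, Finset.mem_univ, true_and] at hp ⊢
      refine ⟨hp.1, ?_, ?_⟩
      · rw [pow_right_comm, hp.2.1]
      · rw [← pow_mul]
        norm_num
        exact hp.2.2
    · rintro ⟨s, t⟩ hp ⟨s', t'⟩ hp' h
      simp only [Finset.mem_filter, Finset.mem_univ, true_and] at hp hp'
      simp only [Prod.mk.injEq] at h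
      obtain ⟨h1, h2⟩ := h
      exact Prod.ext h1 (h5inj t t' hp.2.1 hp'.2.1 h2)
    · rintro ⟨s, u⟩ hp
      simp only [Finset.mem_filter, Finset.mem_univ, true_and] at hp
      obtain ⟨t, ht, hte⟩ := h5surj u hp.2.1
      refine ⟨(s, t), ?_, ?_⟩
      · simp only [Finset.mem_filter, Finset.mem_univ, true_and]
        refine ⟨hp.1, ht, ?_⟩
        have : t ^ 10 = (t ^ 5) ^ 2 := by ring
        rw [this, hte]
        exact hp.2.2
      · simp [hte]
  -- Part 1
  have part1 : ∀ a b : K,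
      (b ∈ scalarSet K q ξ → {x : K | f (x + a) - b ∈ scalarSet K q ξ}.ncard = 1) ∧
      (b ∉ scalarSet K q ξ → {x : K | f (x + a) - b ∈ scalarSet K q ξ}.ncard = q + 1) := by
    intro a b
    obtain ⟨b₀, b₁, hb₀, hb₁, hb⟩ := aux_decomp_surj hcard hsub hFq hξ b
    have h0q : (0 : K) ^ q = 0 := zero_pow (by omega)
    have hbmem : b ∈ scalarSet K q ξ ↔ b₀ = 0 := by
      constructor
      · rintro ⟨r, hr, hbr⟩
        have heq : b₀ + b₁ * ξ = 0 + r * ξ := by rw [← hb, ← hbr]; ring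
        exact (aux_decomp_unique hsub hξ hb₀ hb₁ h0q hr heq).1
      · intro h0
        exact ⟨b₁, hb₁, by rw [hb, h0, zero_add]⟩
    have hmemiff : ∀ s t : K, s ^ q = s → t ^ q = t →
        (f (s + t * ξ) - b ∈ scalarSet K q ξ ↔ s ^ 2 + t ^ 10 = b₀) := by
      intro s t hs ht
      have hA : (s ^ 2 + t ^ 10 - b₀) ^ q = s ^ 2 + t ^ 10 - b₀ := by
        rw [hsub, hfrob, pow_right_comm s, pow_right_comm t, hs, ht, hb₀]
      have hB : (2 * s * t + t ^ 6 - b₁) ^ q = 2 * s * t + t ^ 6 - b₁ := by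
        have h2q : (2 : K) ^ q = 2 := by
          rw [h2eq, hqodd.neg_one_pow]
        rw [hsub, hfrob, mul_pow, mul_pow, h2q, pow_right_comm t 6, hs, ht, hb₁]
      have hfb : f (s + t * ξ) - b = (s ^ 2 + t ^ 10 - b₀) + (2 * s * t + t ^ 6 - b₁) * ξ := by
        rw [hf s t hs ht, hb]; ring
      constructor
      · rintro ⟨r, hr, hrr⟩
        have heq : (s ^ 2 + t ^ 10 - b₀) + (2 * s * t + t ^ 6 - b₁) * ξ = 0 + r * ξ := by
          rw [← hfb, ← hrr]; ring
        have := (aux_decomp_unique hsub hξ hA hB h0q hr heq).1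
        linear_combination this
      · intro h
        refine ⟨2 * s * t + t ^ 6 - b₁, hB, ?_⟩
        rw [hfb]
        have hA0 : s ^ 2 + t ^ 10 - b₀ = 0 := by linear_combination h
        rw [hA0, zero_add]
    have hScard : {x : K | f (x + a) - b ∈ scalarSet K q ξ}.ncard
        = if b₀ = 0 then 1 else q + 1 := by
      have hshift : {x : K | f (x + a) - b ∈ scalarSet K q ξ}
          = (fun y => y - a) '' {y : K | f y - b ∈ scalarSet K q ξ} := by
        ext x
        simp only [Set.mem_setOf_eq, Set.mem_image]
        constructor
        · intro h
          exact ⟨x + a, h, by ring⟩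
        · rintro ⟨y, hy, rfl⟩
          have hya : y - a + a = y := by ring
          rw [hya]
          exact hy
      have hsubinj : Function.Injective (fun y : K => y - a) := by
        intro y y' h
        simpa using congrArg (· + a) h
      rw [hshift, Set.ncard_image_of_injective _ hsubinj]
      rw [aux_ncard_setOf, ← hcount b₀ hb₀]
      apply (Finset.card_bij (fun (p : K × K) _ => p.1 + p.2 * ξ) ?_ ?_ ?_).symm
      · rintro ⟨s, t⟩ hp
        simp only [Finset.mem_filter, Finset.mem_univ, true_and] at hp ⊢
        exact (hmemiff s t hp.1 hp.2.1).mpr hp.2.2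
      · rintro ⟨s, t⟩ hp ⟨s', t'⟩ hp' h
        simp only [Finset.mem_filter, Finset.mem_univ, true_and] at hp hp'
        have := aux_decomp_unique hsub hξ hp.1 hp.2.1 hp'.1 hp'.2.1 h
        exact Prod.ext this.1 this.2
      · intro y hy
        simp only [Finset.mem_filter, Finset.mem_univ, true_and] at hy
        obtain ⟨s, t, hs, ht, rfl⟩ := aux_decomp_surj hcard hsub hFq hξ y
        refine ⟨(s, t), ?_, rfl⟩
        simp only [Finset.mem_filter, Finset.mem_univ, true_and]
        exact ⟨hs, ht, (hmemiff s t hs ht).mp hy⟩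
    constructor
    · intro hbin
      rw [hScard, if_pos (hbmem.mp hbin)]
    · intro hbnin
      rw [hScard, if_neg (fun h0 => hbnin (hbmem.mpr h0))]
  refine ⟨part1, ?_⟩
  intro L hL
  rcases hL with ⟨a, b, rfl⟩ | ⟨a, rfl⟩ | rfl
  · -- affine line
    have himage : affLine K f a b ∩ unitalSet K q ξ
        = (fun x => (Sum.inl (x, f (x + a) - b) : ShiftPt K)) ''
            {x : K | f (x + a) - b ∈ scalarSet K q ξ} := by
      ext P
      constructor
      · rintro ⟨hPL, hPU⟩
        rcases hPL with ⟨x, rfl⟩ | rfl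
        · rcases hPU with ⟨x', t, ht, heq⟩ | heq
          · rw [Sum.inl.injEq, Prod.mk.injEq] at heq
            obtain ⟨hx, hy⟩ := heq
            exact ⟨x, ⟨t, ht, hy⟩, rfl⟩
          · exact absurd heq (by simp)
        · rcases hPU with ⟨x', t, ht, heq⟩ | heq
          · exact absurd heq (by simp)
          · exact absurd heq (by simp)
      · rintro ⟨x, hx, rfl⟩
        obtain ⟨t, ht, hteq⟩ := hx
        refine ⟨Or.inl ⟨x, rfl⟩, Or.inl ⟨x, t, ht, ?_⟩⟩
        show (Sum.inl (x, f (x + a) - b) : ShiftPt K) = Sum.inl (x, t * ξ)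
        rw [hteq]
    have hinj : Function.Injective
        (fun x : K => (Sum.inl (x, f (x + a) - b) : ShiftPt K)) := by
      intro x x' h
      simp only [Sum.inl.injEq, Prod.mk.injEq] at h
      exact h.1
    rw [himage, Set.ncard_image_of_injective _ hinj]
    by_cases hb : b ∈ scalarSet K q ξ
    · left; exact (part1 a b).1 hb
    · right; exact (part1 a b).2 hb
  · -- vertical line
    have himage : vertLine K a ∩ unitalSet K q ξ
        = (fun t => (Sum.inl (a, t * ξ) : ShiftPt K)) '' {t : K | t ^ q = t}
          ∪ {Sum.inr (Sum.inr ())} := by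
      ext P
      constructor
      · rintro ⟨hPL, hPU⟩
        rcases hPL with ⟨y, rfl⟩ | rfl
        · rcases hPU with ⟨x', t, ht, heq⟩ | heq
          · rw [Sum.inl.injEq, Prod.mk.injEq] at heq
            obtain ⟨hx, hy⟩ := heq
            left
            exact ⟨t, ht, by rw [hy]⟩
          · exact absurd heq (by simp)
        · right; rfl
      · rintro (⟨t, ht, rfl⟩ | hP)
        · exact ⟨Or.inl ⟨t * ξ, rfl⟩, Or.inl ⟨a, t, ht, rfl⟩⟩
        · rw [Set.mem_singleton_iff] at hP
          subst hP
          exact ⟨Or.inr rfl, Or.inr rfl⟩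
    rw [himage]
    right
    have hdisj : Disjoint
        ((fun t => (Sum.inl (a, t * ξ) : ShiftPt K)) '' {t : K | t ^ q = t})
        {(Sum.inr (Sum.inr ()) : ShiftPt K)} := by
      rw [Set.disjoint_singleton_right]
      rintro ⟨t, ht, h⟩
      simp at h
    rw [Set.ncard_union_eq hdisj (Set.toFinite _) (Set.toFinite _)]
    have hinj : Function.Injective (fun t : K => (Sum.inl (a, t * ξ) : ShiftPt K)) := by
      intro t t' h
      simp only [Sum.inl.injEq, Prod.mk.injEq] at h
      exact mul_left_injective₀ hξ0 h.2
    rw [Set.ncard_image_of_injective _ hinj, Set.ncard_singleton]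
    congr 1
    rw [aux_ncard_setOf]
    exact hFq
  · -- line at infinity
    have heqset : lineAtInf K ∩ unitalSet K q ξ
        = {(Sum.inr (Sum.inr ()) : ShiftPt K)} := by
      ext P
      constructor
      · rintro ⟨⟨s, rfl⟩, hPU⟩
        rcases hPU with ⟨x', t, ht, heq⟩ | heq
        · exact absurd heq (by simp)
        · exact heq
      · rintro hP
        rw [Set.mem_singleton_iff] at hP
        subst hP
        exact ⟨⟨Sum.inr (), rfl⟩, Or.inr rfl⟩
    rw [heqset, Set.ncard_singleton]
    left; rfl
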